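/- Let ℓ ≥ 1 be a fixed integer and ε > 0. Then there exist a constant c > 0 and n₀ such that for every n ≥ n₀ and every integer r with 1 ≤ r ≤ (1/2 − ε)·n, one has m_n(r,ℓ) ≥ c·binom(n,r), where m_n(r,ℓ) is the minimum of |B_r(X) △ B_r(Y)| over all X, Y ⊆ 𝔽ⁿ with X ≠ Y, 1 ≤ |X| ≤ ℓ and 1 ≤ |Y| ≤ ℓ. -/

import Mathlib

open Finset

/-- The Hamming ball of radius `r` around `x` in `𝔽ⁿ = {0,1}ⁿ`. -/
def ballH (n r : ℕ) (x : Fin n → Bool) : Finset (Fin n → Bool) :=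
  Finset.univ.filter (fun y => hammingDist x y ≤ r)

/-- `C` is an `(r, ≤ ℓ)`-identifying code in `𝔽ⁿ`. -/
def IdCode (n r ℓ : ℕ) (C : Finset (Fin n → Bool)) : Prop :=
  C.Nonempty ∧ ∀ X Y : Finset (Fin n → Bool),
    X.card ≤ ℓ → Y.card ≤ ℓ → X ≠ Y →
      (X.biUnion (ballH n r)) ∩ C ≠ (Y.biUnion (ballH n r)) ∩ C

/-- The smallest cardinality of an `(r, ≤ ℓ)`-identifying code in `𝔽ⁿ`. -/
noncomputable def Mid (n r ℓ : ℕ) : ℕ :=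
  sInf {k | ∃ C : Finset (Fin n → Bool), IdCode n r ℓ C ∧ C.card = k}

/-- binary entropy -/
noncomputable def binH (x : ℝ) : ℝ :=
  -(x * Real.logb 2 x) - (1 - x) * Real.logb 2 (1 - x)

/-- m_n(r,ℓ) -/
noncomputable def mlow (n r ℓ : ℕ) : ℕ :=
  sInf {k | ∃ X Y : Finset (Fin n → Bool), X ≠ Y ∧ 1 ≤ X.card ∧ X.card ≤ ℓ ∧
    1 ≤ Y.card ∧ Y.card ≤ ℓ ∧
    (symmDiff (X.biUnion (ballH n r)) (Y.biUnion (ballH n r))).card = k}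

/-- N_ℓ : the number of unordered pairs {X, Y} of distinct subsets with 1 ≤ card ≤ ℓ. -/
def Npairs (n ℓ : ℕ) : ℕ :=
  (((Finset.univ : Finset (Finset (Fin n → Bool))).filter
      (fun X => 1 ≤ X.card ∧ X.card ≤ ℓ)).powersetCard 2).card


section AuxProofs
variable {ι : Type*} [DecidableEq ι]





lemma count_superset (U B : Finset ι) (r : ℕ) (hB : B ⊆ U) (hBr : B.card ≤ r) :
    ((U.powersetCard r).filter (fun T => B ⊆ T)).card
      = (U.card - B.card).choose (r - B.card) := by
  rw [show U.card - B.card = (U \ B).card from (Finset.card_sdiff_of_subset hB).symm,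
    ← Finset.card_powersetCard (r - B.card) (U \ B)]
  apply Finset.card_bij' (fun T _ => T \ B) (fun T _ => T ∪ B)
  · intro T hT
    simp only [mem_filter, mem_powersetCard] at hT
    obtain ⟨⟨hTU, hTr⟩, hBT⟩ := hT
    simp only [mem_powersetCard]
    exact ⟨sdiff_subset_sdiff hTU (le_refl _), by rw [card_sdiff_of_subset hBT, hTr]⟩
  · intro T hT
    simp only [mem_powersetCard] at hT
    obtain ⟨hTU, hTr⟩ := hT
    have hdisj : Disjoint T B := by
      refine disjoint_left.mpr ?_
      intro a haT haB
      exact (mem_sdiff.mp (hTU haT)).2 haB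
    simp only [mem_filter, mem_powersetCard]
    refine ⟨⟨union_subset (hTU.trans sdiff_subset) hB, ?_⟩, subset_union_right⟩
    rw [card_union_of_disjoint hdisj, hTr]
    omega
  · intro T hT
    simp only [mem_filter, mem_powersetCard] at hT
    exact sdiff_union_of_subset hT.2
  · intro T hT
    simp only [mem_powersetCard] at hT
    apply union_sdiff_cancel_right
    refine disjoint_left.mpr ?_
    intro a haT haB
    exact (mem_sdiff.mp (hT.1 haT)).2 haB



lemma count_mem (U : Finset ι) (r : ℕ) (i : ι) (hi : i ∈ U) (hr : 1 ≤ r) :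
    ((U.powersetCard r).filter (fun T => i ∈ T)).card = (U.card - 1).choose (r - 1) := by
  have h := count_superset U {i} r (by simpa using hi) (by simpa using hr)
  simpa using h

lemma count_pair (U : Finset ι) (r : ℕ) (i j : ι) (hi : i ∈ U) (hj : j ∈ U)
    (hij : i ≠ j) (hr : 2 ≤ r) :
    ((U.powersetCard r).filter (fun T => i ∈ T ∧ j ∈ T)).card
      = (U.card - 2).choose (r - 2) := by
  have h := count_superset U {i, j} r ?_ ?_
  · have hc : ({i, j} : Finset ι).card = 2 := by
      rw [card_insert_of_notMem (by simpa using hij), card_singleton]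
    rw [hc] at h
    rw [← h]
    congr 1
    ext T
    simp [insert_subset_iff]
  · intro a ha
    simp only [mem_insert, mem_singleton] at ha
    rcases ha with rfl | rfl <;> assumption
  · have hc : ({i, j} : Finset ι).card = 2 := by
      rw [card_insert_of_notMem (by simpa using hij), card_singleton]
    omega

lemma card_inter_eq_sum (A T : Finset ι) :
    (T ∩ A).card = ∑ i ∈ A, if i ∈ T then 1 else 0 := by
  rw [inter_comm, ← Finset.filter_mem_eq_inter, Finset.card_filter]

lemma moment1 (U A : Finset ι) (r : ℕ) (hA : A ⊆ U) (hr : 1 ≤ r) :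
    ∑ T ∈ U.powersetCard r, (T ∩ A).card = A.card * (U.card - 1).choose (r - 1) := by
  simp_rw [card_inter_eq_sum]
  rw [Finset.sum_comm]
  rw [Finset.sum_congr rfl (fun i hi => ?_)]
  · rw [Finset.sum_const, smul_eq_mul]
  · rw [← Finset.card_filter]
    exact count_mem U r i (hA hi) hr

lemma moment2 (U A : Finset ι) (r : ℕ) (hA : A ⊆ U) (hr : 2 ≤ r) :
    ∑ T ∈ U.powersetCard r, (T ∩ A).card ^ 2
      = A.card * (U.card - 1).choose (r - 1)
        + (A.card * (A.card - 1)) * (U.card - 2).choose (r - 2) := by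
  have key : ∀ T ∈ U.powersetCard r, (T ∩ A).card ^ 2
      = ∑ i ∈ A, ∑ j ∈ A, (if i ∈ T ∧ j ∈ T then 1 else 0) := by
    intro T _
    rw [sq, card_inter_eq_sum, Finset.sum_mul_sum]
    refine Finset.sum_congr rfl fun i _ => Finset.sum_congr rfl fun j _ => ?_
    split_ifs with h1 h2 h3 <;> simp_all
  rw [Finset.sum_congr rfl key, Finset.sum_comm]
  have inner : ∀ i ∈ A, ∑ T ∈ U.powersetCard r, ∑ j ∈ A, (if i ∈ T ∧ j ∈ T then 1 else 0)
      = (U.card - 1).choose (r - 1) + (A.card - 1) * (U.card - 2).choose (r - 2) := by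
    intro i hiA
    rw [Finset.sum_comm]
    rw [← Finset.add_sum_erase _ _ hiA]
    congr 1
    · simp_rw [and_self]
      rw [← Finset.card_filter]
      exact count_mem U r i (hA hiA) (by omega)
    · rw [Finset.sum_congr rfl (fun j hj => ?_), Finset.sum_const, smul_eq_mul,
        Finset.card_erase_of_mem hiA]
      rw [← Finset.card_filter]
      have hj' := Finset.mem_erase.mp hj
      exact count_pair U r i j (hA hiA) (hA hj'.2) (Ne.symm hj'.1) hr
  rw [Finset.sum_congr rfl inner, Finset.sum_const, smul_eq_mul]
  ring_nf




lemma choose_id1 (N r : ℕ) (hN : 1 ≤ N) (hr : 1 ≤ r) :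
    N * (N - 1).choose (r - 1) = r * N.choose r := by
  obtain ⟨n, rfl⟩ : ∃ n, N = n + 1 := ⟨N - 1, by omega⟩
  obtain ⟨k, rfl⟩ : ∃ k, r = k + 1 := ⟨r - 1, by omega⟩
  have h := Nat.add_one_mul_choose_eq n k
  simp only [Nat.add_sub_cancel]
  rw [h, Nat.mul_comm]

lemma choose_halving (M r s : ℕ) (h : 2 * r + s ≤ M) :
    M.choose r ≤ 2 ^ s * (M - s).choose r := by
  induction s with
  | zero => simp
  | succ s ih =>
    have h1 : M.choose r ≤ 2 ^ s * (M - s).choose r := ih (by omega)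
    have h2 : (M - s).choose r ≤ 2 * (M - s - 1).choose r := by
      set K := M - s with hK
      have hK1 : 2 * r + 1 ≤ K := by omega
      have key := Nat.choose_mul_succ_eq (K - 1) r
      have hKs : K - 1 + 1 = K := by omega
      rw [hKs] at key
      -- key : (K-1).choose r * K = K.choose r * (K - r)
      have hpos : 0 < K - r := by omega
      have : K.choose r * (K - r) ≤ 2 * (K - 1).choose r * (K - r) := by
        calc K.choose r * (K - r) = (K - 1).choose r * K := key.symm
        _ ≤ (K - 1).choose r * (2 * (K - r)) := by
            apply Nat.mul_le_mul_left; omega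
        _ = 2 * (K - 1).choose r * (K - r) := by ring
      exact Nat.le_of_mul_le_mul_right this hpos
    calc M.choose r ≤ 2 ^ s * (M - s).choose r := h1
      _ ≤ 2 ^ s * (2 * (M - s - 1).choose r) := Nat.mul_le_mul_left _ h2
      _ = 2 ^ (s + 1) * (M - (s + 1)).choose r := by
          rw [pow_succ]
          have : M - s - 1 = M - (s + 1) := by omega
          rw [this]; ring

lemma aux1 (e d l : ℝ) (he : e < 1/2) (hd : d ≤ 4) (hl : 1 ≤ l) (hld : l ≤ e^2*d)
    (hd0 : 0 ≤ d) (he0 : 0 < e) : False := by nlinarith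

lemma aux2 (a r N e : ℝ) (h : r ≤ (1/2-e)*N) (ha : 0 ≤ a) :
    2*(a*r) ≤ (a*(1-2*e))*N := by nlinarith

lemma aux3 (a r N : ℝ) (ha : 1 ≤ a) (hr : 1 ≤ r) (haN : a ≤ N) (hrN : r ≤ N) :
    (a-1)*(r-1)*N ≤ a*r*(N-1) := by nlinarith

lemma cheb_count (U A : Finset ι) (r d l : ℕ) (ε₂ : ℝ)
    (hA : A ⊆ U) (hrU : r ≤ U.card) (had : A.card ≤ d)
    (hε : 0 < ε₂)
    (hrN : (r : ℝ) ≤ (1/2 - ε₂) * U.card)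
    (hld : (l : ℝ) ≤ ε₂^2 * d) (hl1 : 1 ≤ l) (hr1 : 1 ≤ r) :
    2 * l * ((U.powersetCard r).filter (fun T => d ≤ 2 * (T ∩ A).card)).card
      ≤ U.card.choose r := by
  set N := U.card with hNdef
  set P := U.powersetCard r with hPdef
  have hNpos : 0 < N := lt_of_lt_of_le hr1 hrU
  have hε2half : ε₂ < 1/2 := by
    by_contra hc
    push_neg at hc
    have h1 : (r : ℝ) ≤ 0 := le_trans hrN
      (mul_nonpos_of_nonpos_of_nonneg (by linarith) (Nat.cast_nonneg N))
    have h2 : (1 : ℝ) ≤ r := by exact_mod_cast hr1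
    linarith
  have hd4 : 5 ≤ d := by
    by_contra hc
    push_neg at hc
    have hdr : (d : ℝ) ≤ 4 := by exact_mod_cast Nat.lt_succ_iff.mp hc
    have hlR : (1:ℝ) ≤ l := by exact_mod_cast hl1
    exact aux1 ε₂ d l hε2half hdr hlR hld (Nat.cast_nonneg d) hε
  by_cases hdeg : 2 * r < d ∨ A.card = 0
  · have hempty : (P.filter (fun T => d ≤ 2 * (T ∩ A).card)) = ∅ := by
      rw [Finset.filter_eq_empty_iff]
      intro T hT
      have hTcard : T.card = r := (Finset.mem_powersetCard.mp hT).2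
      have hc1 : (T ∩ A).card ≤ r := by
        calc (T ∩ A).card ≤ T.card := card_le_card inter_subset_left
        _ = r := hTcard
      have hc2 : (T ∩ A).card ≤ A.card := card_le_card inter_subset_right
      rcases hdeg with h | h <;> omega
    rw [hempty]
    simp
  push_neg at hdeg
  obtain ⟨hdr, ha0⟩ := hdeg
  have ha1 : 1 ≤ A.card := Nat.pos_of_ne_zero ha0
  have hr2 : 2 ≤ r := by omega
  have hN2 : 2 ≤ N := le_trans hr2 hrU
  have haN : A.card ≤ N := card_le_card hA
  set a := A.card with hadef
  set count := (P.filter (fun T => d ≤ 2 * (T ∩ A).card)).card with hcount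
  have m1 := moment1 U A r hA (by omega)
  have m2 := moment2 U A r hA hr2
  set C0 := N.choose r with hC0
  set C1 := (N-1).choose (r-1) with hC1
  set C2 := (N-2).choose (r-2) with hC2
  have id1 : N * C1 = r * C0 := choose_id1 N r (by omega) (by omega)
  have id2 : (N - 1) * C2 = (r - 1) * C1 := by
    have h := choose_id1 (N-1) (r-1) (by omega) (by omega)
    have e1 : N - 1 - 1 = N - 2 := by omega
    have e2 : r - 1 - 1 = r - 2 := by omega
    rw [e1, e2] at h
    exact h
  have m1R : ∑ T ∈ P, ((T ∩ A).card : ℝ) = (a : ℝ) * C1 := by exact_mod_cast m1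
  have m2R : ∑ T ∈ P, ((T ∩ A).card : ℝ)^2
      = (a : ℝ) * C1 + ((a:ℝ) * ((a:ℝ) - 1)) * C2 := by
    have h := congrArg (Nat.cast (R := ℝ)) m2
    push_cast [Nat.cast_sub (show 1 ≤ A.card from ha1)] at h
    convert h using 2 <;> push_cast <;> ring
  have id1R : (N : ℝ) * C1 = (r : ℝ) * C0 := by exact_mod_cast id1
  have id2R : ((N : ℝ) - 1) * C2 = ((r : ℝ) - 1) * C1 := by
    have h := congrArg (Nat.cast (R := ℝ)) id2
    push_cast [Nat.cast_sub (by omega : 1 ≤ N), Nat.cast_sub (by omega : 1 ≤ r)] at h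
    exact h
  have hPcard : ((P.card : ℕ) : ℝ) = (C0 : ℝ) := by
    rw [hPdef, Finset.card_powersetCard]
  clear_value N P a count C0 C1 C2
  clear m1 m2 id1 id2
  set μ : ℝ := (a : ℝ) * r / N with hμ
  have hNR : (0:ℝ) < N := by exact_mod_cast hNpos
  have hNne : (N:ℝ) ≠ 0 := ne_of_gt hNR
  have haR : (1:ℝ) ≤ a := by exact_mod_cast ha1
  have hrR : (1:ℝ) ≤ r := by exact_mod_cast hr1
  have hadR : (a:ℝ) ≤ d := by exact_mod_cast had
  have hrNR : (r:ℝ) ≤ N := by exact_mod_cast hrU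
  have haNR : (a:ℝ) ≤ N := by exact_mod_cast haN
  have hC0nonneg : (0:ℝ) ≤ C0 := Nat.cast_nonneg _
  have hμa : 2 * μ ≤ (a : ℝ) * (1 - 2*ε₂) := by
    have h2 : (2:ℝ) * ((a:ℝ) * r) ≤ ((a:ℝ) * (1 - 2*ε₂)) * N :=
      aux2 _ _ _ _ hrN (by linarith)
    calc 2*μ = 2*((a:ℝ)*r)/N := by rw [hμ]; ring
    _ ≤ (a : ℝ) * (1 - 2*ε₂) := by rw [div_le_iff₀ hNR]; exact h2
  have hμd : 2 * μ ≤ (d : ℝ) * (1 - 2*ε₂) := by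
    have := mul_le_mul_of_nonneg_right hadR (by linarith : (0:ℝ) ≤ 1 - 2*ε₂)
    linarith
  have hdμ : 2 * ε₂ * d ≤ (d : ℝ) - 2*μ := by
    have hexp : (d:ℝ)*(1-2*ε₂) = d - 2*ε₂*d := by ring
    linarith
  have hdpos : (0:ℝ) < d := by
    have : (5:ℝ) ≤ d := by exact_mod_cast hd4
    linarith
  have hμpos : 0 < μ := by rw [hμ]; positivity
  -- step A
  have stepA : (count : ℝ) * ((d:ℝ) - 2*μ)^2
      ≤ ∑ T ∈ P, (2*((T ∩ A).card : ℝ) - 2*μ)^2 := by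
    have h1 : (count : ℝ) * ((d:ℝ) - 2*μ)^2
        ≤ ∑ T ∈ P.filter (fun T => d ≤ 2 * (T ∩ A).card),
            (2*((T ∩ A).card : ℝ) - 2*μ)^2 := by
      rw [hcount, ← nsmul_eq_mul]
      apply Finset.card_nsmul_le_sum
      intro T hT
      have hTd : d ≤ 2 * (T ∩ A).card := (Finset.mem_filter.mp hT).2
      have hTdR : (d : ℝ) ≤ 2 * ((T ∩ A).card : ℝ) := by exact_mod_cast hTd
      have hed : (0:ℝ) ≤ 2*ε₂*(d:ℝ) := by positivity
      have h0 : (0:ℝ) ≤ (d:ℝ) - 2*μ := by linarith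
      exact pow_le_pow_left₀ h0 (by linarith) 2
    refine le_trans h1 (Finset.sum_le_sum_of_subset_of_nonneg (Finset.filter_subset _ _) ?_)
    intro T _ _
    positivity
  -- step B
  have stepB : ∑ T ∈ P, (2*((T ∩ A).card : ℝ) - 2*μ)^2
      = 4 * ((a : ℝ) * C1 + ((a:ℝ) * ((a:ℝ) - 1)) * C2) - 8*μ*((a:ℝ)*C1) + 4*μ^2*(C0:ℝ) := by
    have expand : ∀ T ∈ P, (2*((T ∩ A).card : ℝ) - 2*μ)^2
        = 4*((T ∩ A).card : ℝ)^2 - 8*μ*((T ∩ A).card : ℝ) + 4*μ^2 := by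
      intro T _; ring
    rw [Finset.sum_congr rfl expand]
    rw [Finset.sum_add_distrib, Finset.sum_sub_distrib, ← Finset.mul_sum, ← Finset.mul_sum,
      Finset.sum_const, nsmul_eq_mul, hPcard, m1R, m2R]
    ring
  -- step C
  have hμN : μ * N = (a:ℝ) * r := by rw [hμ]; field_simp
  have hC2N : ((N:ℝ) * ((N:ℝ)-1)) * C2 = (r:ℝ) * ((r:ℝ)-1) * C0 := by
    calc ((N:ℝ) * ((N:ℝ)-1)) * C2 = ((r:ℝ)-1) * ((N:ℝ) * C1) := by
          rw [mul_assoc, id2R]; ring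
    _ = ((r:ℝ)-1) * ((r:ℝ) * C0) := by rw [id1R]
    _ = (r:ℝ) * ((r:ℝ)-1) * C0 := by ring
  have hK : ((a:ℝ)-1)*((r:ℝ)-1)*(N:ℝ) ≤ (a:ℝ)*(r:ℝ)*((N:ℝ)-1) :=
    aux3 _ _ _ haR hrR haNR hrNR
  have key : ((a:ℝ) * ((a:ℝ)-1)) * C2 ≤ μ^2 * C0 := by
    have hK2 : (a:ℝ)*((a:ℝ)-1)*((r:ℝ)*((r:ℝ)-1))*(N:ℝ)
        ≤ ((a:ℝ)*(r:ℝ))*((a:ℝ)*(r:ℝ))*((N:ℝ)-1) := by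
      have hK2' := mul_le_mul_of_nonneg_left hK (by positivity : (0:ℝ) ≤ (a:ℝ)*(r:ℝ))
      calc (a:ℝ)*((a:ℝ)-1)*((r:ℝ)*((r:ℝ)-1))*(N:ℝ)
          = ((a:ℝ)*(r:ℝ))*(((a:ℝ)-1)*((r:ℝ)-1)*(N:ℝ)) := by ring
      _ ≤ ((a:ℝ)*(r:ℝ))*((a:ℝ)*(r:ℝ)*((N:ℝ)-1)) := hK2'
      _ = ((a:ℝ)*(r:ℝ))*((a:ℝ)*(r:ℝ))*((N:ℝ)-1) := by ring
    have hscale : ((a:ℝ)*((a:ℝ)-1)) * C2 * ((N:ℝ)^2*((N:ℝ)-1))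
        ≤ μ^2*C0*((N:ℝ)^2*((N:ℝ)-1)) := by
      have lhs_eq : ((a:ℝ)*((a:ℝ)-1)) * C2 * ((N:ℝ)^2*((N:ℝ)-1))
          = ((a:ℝ)*((a:ℝ)-1)) * (N:ℝ) * (((N:ℝ)*((N:ℝ)-1))*C2) := by ring
      have rhs_eq : μ^2*(C0:ℝ)*((N:ℝ)^2*((N:ℝ)-1)) = (μ*N)*(μ*N)*(((N:ℝ)-1)*(C0:ℝ)) := by
        ring
      rw [lhs_eq, rhs_eq, hC2N, hμN]
      calc (a:ℝ)*((a:ℝ)-1)*(N:ℝ)*((r:ℝ)*((r:ℝ)-1)*(C0:ℝ))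
          = ((a:ℝ)*((a:ℝ)-1)*((r:ℝ)*((r:ℝ)-1))*(N:ℝ))*(C0:ℝ) := by ring
      _ ≤ (((a:ℝ)*(r:ℝ))*((a:ℝ)*(r:ℝ))*((N:ℝ)-1))*(C0:ℝ) :=
          mul_le_mul_of_nonneg_right hK2 hC0nonneg
      _ = (a:ℝ)*(r:ℝ)*((a:ℝ)*(r:ℝ))*(((N:ℝ)-1)*(C0:ℝ)) := by ring
    have hposN : (0:ℝ) < (N:ℝ)^2*((N:ℝ)-1) := by
      have h2 : (2:ℝ) ≤ N := by exact_mod_cast hN2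
      have h3 : (0:ℝ) < (N:ℝ)-1 := by linarith
      have h4 : (0:ℝ) < (N:ℝ) := by linarith
      positivity
    exact le_of_mul_le_mul_right hscale hposN
  have hS1 : (a:ℝ)*C1 = μ*C0 := by
    have h : ((a:ℝ)*C1) * N = (μ*C0) * N := by
      calc ((a:ℝ)*C1) * N = (a:ℝ)*((N:ℝ)*C1) := by ring
      _ = (a:ℝ)*((r:ℝ)*C0) := by rw [id1R]
      _ = (μ*N)*C0 := by rw [hμN]; ring
      _ = (μ*C0) * N := by ring
    exact mul_right_cancel₀ hNne h
  have final1 : (count:ℝ) * ((d:ℝ)-2*μ)^2 ≤ 4*μ*C0 := by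
    calc (count:ℝ) * ((d:ℝ)-2*μ)^2 ≤ ∑ T ∈ P, (2*((T ∩ A).card : ℝ) - 2*μ)^2 := stepA
    _ = 4 * ((a : ℝ) * C1 + ((a:ℝ) * ((a:ℝ) - 1)) * C2) - 8*μ*((a:ℝ)*C1) + 4*μ^2*(C0:ℝ) :=
        stepB
    _ = 4*μ*C0 + 4*(((a:ℝ) * ((a:ℝ)-1)) * C2 - μ^2*C0) := by rw [hS1]; ring
    _ ≤ 4*μ*C0 := by linarith
  have hcnonneg : (0:ℝ) ≤ (count:ℝ) := Nat.cast_nonneg _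
  have h1 : (count:ℝ) * (4*ε₂^2*(d:ℝ)^2) ≤ 4*μ*C0 := by
    have hsq : (2*ε₂*(d:ℝ))^2 ≤ ((d:ℝ)-2*μ)^2 := pow_le_pow_left₀ (by positivity) hdμ 2
    calc (count:ℝ) * (4*ε₂^2*(d:ℝ)^2) = (count:ℝ)*(2*ε₂*(d:ℝ))^2 := by ring
    _ ≤ (count:ℝ)*((d:ℝ)-2*μ)^2 := mul_le_mul_of_nonneg_left hsq hcnonneg
    _ ≤ 4*μ*C0 := final1
  have h2 : (count:ℝ) * (4*ε₂^2*(d:ℝ)^2) ≤ 2*(d:ℝ)*C0 := by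
    have h4μ : 4*μ ≤ 2*(d:ℝ) := by
      have hexp : (d:ℝ)*(1-2*ε₂) = d - 2*ε₂*d := by ring
      have hed : (0:ℝ) ≤ 2*ε₂*(d:ℝ) := by positivity
      linarith
    have := mul_le_mul_of_nonneg_right h4μ hC0nonneg
    calc (count:ℝ) * (4*ε₂^2*(d:ℝ)^2) ≤ 4*μ*C0 := h1
    _ = 4*μ*(C0:ℝ) := by ring
    _ ≤ 2*(d:ℝ)*C0 := this
  have h3 : 2*(l:ℝ)*(count:ℝ)*(2*(d:ℝ)) ≤ (C0:ℝ)*(2*(d:ℝ)) := by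
    have hl' : (l:ℝ)*((count:ℝ)*(4*(d:ℝ))) ≤ (ε₂^2*(d:ℝ))*((count:ℝ)*(4*(d:ℝ))) :=
      mul_le_mul_of_nonneg_right hld (by positivity)
    calc 2*(l:ℝ)*(count:ℝ)*(2*(d:ℝ)) = (l:ℝ)*((count:ℝ)*(4*(d:ℝ))) := by ring
    _ ≤ (ε₂^2*(d:ℝ))*((count:ℝ)*(4*(d:ℝ))) := hl'
    _ = (count:ℝ)*(4*ε₂^2*(d:ℝ)^2) := by ring
    _ ≤ 2*(d:ℝ)*C0 := h2
    _ = (C0:ℝ)*(2*(d:ℝ)) := by ring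
  have h4 : 2*(l:ℝ)*(count:ℝ) ≤ (C0:ℝ) := le_of_mul_le_mul_right h3 (by positivity)
  exact_mod_cast h4



end AuxProofs

def diffF {n : ℕ} (x y : Fin n → Bool) : Finset (Fin n) :=
  Finset.univ.filter (fun i => x i ≠ y i)

def flipF {n : ℕ} (x : Fin n → Bool) (T : Finset (Fin n)) : Fin n → Bool :=
  fun i => if i ∈ T then !(x i) else x i

lemma hamming_eq_diff {n : ℕ} (x y : Fin n → Bool) : hammingDist x y = (diffF x y).card := rfl

lemma mem_ballH {n r : ℕ} (x z : Fin n → Bool) : z ∈ ballH n r x ↔ hammingDist x z ≤ r := by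
  simp [ballH]

lemma diffF_comm {n : ℕ} (x y : Fin n → Bool) : diffF x y = diffF y x := by
  ext i; simp [diffF, ne_comm]

lemma diffF_flipF {n : ℕ} (x : Fin n → Bool) (T : Finset (Fin n)) :
    diffF x (flipF x T) = T := by
  ext i
  simp only [diffF, flipF, mem_filter, mem_univ, true_and]
  by_cases h : i ∈ T <;> simp [h]

lemma flipF_inj {n : ℕ} (x : Fin n → Bool) {T T' : Finset (Fin n)}
    (h : flipF x T = flipF x T') : T = T' := by
  rw [← diffF_flipF x T, ← diffF_flipF x T', h]

lemma diffF_flipF_other {n : ℕ} (x y : Fin n → Bool) (T : Finset (Fin n)) :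
    diffF (flipF x T) y = symmDiff (diffF x y) T := by
  ext i
  simp only [diffF, mem_filter, mem_univ, true_and, Finset.mem_symmDiff]
  simp only [flipF]
  by_cases h : i ∈ T
  · simp only [h, if_pos]
    cases hx : x i <;> cases hy : y i <;> simp [h]
  · simp only [h, if_neg]
    simp [h]

lemma card_symmDiff_le_iff {ι : Type*} [DecidableEq ι] (D T : Finset ι) (r : ℕ)
    (hT : T.card = r) :
    (symmDiff D T).card ≤ r ↔ D.card ≤ 2 * (T ∩ D).card := by
  have h1 : (symmDiff D T).card = (D \ T).card + (T \ D).card := by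
    have : symmDiff D T = (D \ T) ∪ (T \ D) := by
      ext i; simp [Finset.mem_symmDiff]
    rw [this]
    exact card_union_of_disjoint (disjoint_sdiff_sdiff)
  have h2 : (D \ T).card + (D ∩ T).card = D.card := card_sdiff_add_card_inter D T
  have h3 : (T \ D).card + (T ∩ D).card = T.card := card_sdiff_add_card_inter T D
  have h4 : (D ∩ T).card = (T ∩ D).card := by rw [inter_comm]
  omega

lemma one_sided (n r l D : ℕ) (ε₂ : ℝ) (hε : 0 < ε₂)
    (hl1 : 1 ≤ l) (hr1 : 1 ≤ r)
    (hld : (l : ℝ) ≤ ε₂^2 * ((D : ℝ) + 1))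
    (h2r : 2*r + l*D ≤ n)
    (hrn : (r : ℝ) ≤ (1/2 - ε₂) * ((n : ℝ) - (l*D : ℕ)))
    (x : Fin n → Bool) (W : Finset (Fin n → Bool)) (hxW : x ∉ W) (hWl : W.card ≤ l) :
    n.choose r ≤ 2^(l*D+1) * ((ballH n r x \ W.biUnion (ballH n r)).card) := by
  classical
  set Wnear := W.filter (fun y => (diffF x y).card ≤ D) with hWnear
  set S := Wnear.biUnion (fun y => diffF x y) with hSdef
  have hScard : S.card ≤ l * D := by
    calc S.card ≤ ∑ y ∈ Wnear, (diffF x y).card := card_biUnion_le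
    _ ≤ ∑ _y ∈ Wnear, D := sum_le_sum (fun y hy => (mem_filter.mp hy).2)
    _ = Wnear.card * D := by rw [sum_const, smul_eq_mul]
    _ ≤ l * D := Nat.mul_le_mul_right D (le_trans (card_filter_le _ _) hWl)
  set U := Sᶜ with hUdef
  have hUcard : U.card = n - S.card := by
    rw [hUdef, card_compl, Fintype.card_fin]
  have hrU : r ≤ U.card := by omega
  set P := U.powersetCard r with hPdef
  set Good := P.filter (fun T => flipF x T ∉ W.biUnion (ballH n r)) with hGooddef
  set Bad := P.filter (fun T => ¬ flipF x T ∉ W.biUnion (ballH n r)) with hBaddef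
  -- injection into the target set
  have hinj : Good.card ≤ ((ballH n r x \ W.biUnion (ballH n r)).card) := by
    apply Finset.card_le_card_of_injOn (flipF x)
    · intro T hT
      rw [hGooddef, mem_coe, mem_filter] at hT
      obtain ⟨hTP, hTnot⟩ := hT
      rw [hPdef, mem_powersetCard] at hTP
      rw [mem_coe, mem_sdiff, mem_ballH]
      constructor
      · rw [hamming_eq_diff, diffF_flipF, hTP.2]
      · exact hTnot
    · intro T1 h1 T2 h2 h12
      exact flipF_inj x h12
  -- each bad T is covered by a far y
  have hBadsub : Bad ⊆ (W.filter (fun y => ¬ (diffF x y).card ≤ D)).biUnion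
      (fun y => P.filter (fun T => (diffF x y).card ≤ 2 * (T ∩ (diffF x y \ S)).card)) := by
    intro T hT
    rw [hBaddef, mem_filter, not_not] at hT
    obtain ⟨hTP, hTin⟩ := hT
    rw [mem_biUnion] at hTin
    obtain ⟨y, hyW, hyball⟩ := hTin
    have hTP' := hTP
    rw [hPdef, mem_powersetCard] at hTP'
    obtain ⟨hTU, hTr⟩ := hTP'
    rw [mem_ballH, hamming_eq_diff, diffF_comm, diffF_flipF_other] at hyball
    have hcov : (diffF x y).card ≤ 2 * (T ∩ diffF x y).card :=
      (card_symmDiff_le_iff (diffF x y) T r hTr).mp hyball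
    -- T ∩ diffF x y = T ∩ (diffF x y \ S)
    have hTS : ∀ i ∈ T, i ∉ S := by
      intro i hi
      have := hTU hi
      rw [hUdef, Finset.mem_compl] at this
      exact this
    have hinter : T ∩ diffF x y = T ∩ (diffF x y \ S) := by
      ext i
      simp only [mem_inter, mem_sdiff]
      constructor
      · rintro ⟨h1, h2⟩; exact ⟨h1, h2, hTS i h1⟩
      · rintro ⟨h1, h2, _⟩; exact ⟨h1, h2⟩
    rw [hinter] at hcov
    -- y must be far
    have hyfar : ¬ (diffF x y).card ≤ D := by
      intro hnear
      have hyNear : y ∈ Wnear := by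
        rw [hWnear, mem_filter]; exact ⟨hyW, hnear⟩
      have hDS : diffF x y ⊆ S := by
        rw [hSdef]
        exact subset_biUnion_of_mem (fun y => diffF x y) hyNear
      have hempty : T ∩ (diffF x y \ S) = ∅ := by
        apply eq_empty_of_forall_notMem
        intro i hi
        rw [mem_inter, mem_sdiff] at hi
        exact hi.2.2 (hDS hi.2.1)
      rw [hempty] at hcov
      simp at hcov
      -- diffF x y = ∅ means x = y
      have hxy : x = y := by
        funext i
        by_contra hne
        have hmem : i ∈ diffF x y := by simp [diffF, hne]
        rw [hcov] at hmem
        exact notMem_empty i hmem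
      exact hxW (hxy ▸ hyW)
    rw [mem_biUnion]
    refine ⟨y, ?_, ?_⟩
    · rw [mem_filter]; exact ⟨hyW, hyfar⟩
    · rw [mem_filter]; exact ⟨hTP, hcov⟩
  -- (1/2 - ε₂) > 0
  have hε2half : 0 < 1/2 - ε₂ := by
    by_contra hc
    push_neg at hc
    have h1 : (r:ℝ) ≤ 0 := by
      refine le_trans hrn (mul_nonpos_of_nonpos_of_nonneg (by linarith) ?_)
      have : ((l*D : ℕ) : ℝ) ≤ (n : ℝ) := by exact_mod_cast (by omega : l*D ≤ n)
      linarith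
    have h2 : (1:ℝ) ≤ r := by exact_mod_cast hr1
    linarith
  -- bound each far y's bad count via cheb_count
  have hfar : ∀ y ∈ W.filter (fun y => ¬ (diffF x y).card ≤ D),
      2 * l * (P.filter (fun T => (diffF x y).card ≤ 2 * (T ∩ (diffF x y \ S)).card)).card
        ≤ U.card.choose r := by
    intro y hy
    rw [mem_filter] at hy
    obtain ⟨hyW, hyfar⟩ := hy
    push_neg at hyfar
    apply cheb_count U (diffF x y \ S) r ((diffF x y).card) l ε₂
    · intro i hi
      rw [mem_sdiff] at hi
      rw [hUdef, Finset.mem_compl]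
      exact hi.2
    · exact hrU
    · exact card_le_card sdiff_subset
    · exact hε
    · -- (r : ℝ) ≤ (1/2 - ε₂) * U.card
      refine le_trans hrn ?_
      apply mul_le_mul_of_nonneg_left _ (le_of_lt hε2half)
      rw [hUcard]
      have h1 : ((n - S.card : ℕ) : ℝ) = (n : ℝ) - S.card := by
        rw [Nat.cast_sub (by omega)]
      rw [h1]
      have h2 : (S.card : ℝ) ≤ ((l*D : ℕ) : ℝ) := by exact_mod_cast hScard
      linarith
    · -- (l : ℝ) ≤ ε₂^2 * d
      refine le_trans hld ?_
      apply mul_le_mul_of_nonneg_left _ (by positivity)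
      have : D + 1 ≤ (diffF x y).card := hyfar
      exact_mod_cast this
    · exact hl1
    · exact hr1
  -- total bad count
  have hBadcount : 2 * Bad.card ≤ U.card.choose r := by
    have h1 : Bad.card ≤ ∑ y ∈ W.filter (fun y => ¬ (diffF x y).card ≤ D),
        (P.filter (fun T => (diffF x y).card ≤ 2 * (T ∩ (diffF x y \ S)).card)).card :=
      le_trans (card_le_card hBadsub) card_biUnion_le
    have h2 : 2 * l * Bad.card ≤ l * U.card.choose r := by
      calc 2 * l * Bad.card ≤ 2 * l * ∑ y ∈ W.filter (fun y => ¬ (diffF x y).card ≤ D),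
            (P.filter (fun T => (diffF x y).card ≤ 2 * (T ∩ (diffF x y \ S)).card)).card :=
          Nat.mul_le_mul_left _ h1
      _ = ∑ y ∈ W.filter (fun y => ¬ (diffF x y).card ≤ D),
            2 * l * (P.filter (fun T => (diffF x y).card ≤ 2 * (T ∩ (diffF x y \ S)).card)).card := by
          rw [mul_sum]
      _ ≤ ∑ _y ∈ W.filter (fun y => ¬ (diffF x y).card ≤ D), U.card.choose r :=
          sum_le_sum hfar
      _ = (W.filter (fun y => ¬ (diffF x y).card ≤ D)).card * U.card.choose r := by
          rw [sum_const, smul_eq_mul]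
      _ ≤ l * U.card.choose r :=
          Nat.mul_le_mul_right _ (le_trans (card_filter_le _ _) hWl)
    have h3 : l * (2 * Bad.card) ≤ l * U.card.choose r := by
      calc l * (2 * Bad.card) = 2 * l * Bad.card := by ring
      _ ≤ l * U.card.choose r := h2
    exact Nat.le_of_mul_le_mul_left h3 (by omega)
  -- Good + Bad = C(N, r)
  have hsplit : Good.card + Bad.card = U.card.choose r := by
    rw [hGooddef, hBaddef, Finset.card_filter_add_card_filter_not, hPdef,
      Finset.card_powersetCard]
  have hGoodbig : U.card.choose r ≤ 2 * Good.card := by omega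
  -- assemble
  calc n.choose r ≤ 2 ^ (S.card) * (n - S.card).choose r :=
        choose_halving n r S.card (by omega)
  _ = 2 ^ (S.card) * U.card.choose r := by rw [hUcard]
  _ ≤ 2 ^ (S.card) * (2 * Good.card) := Nat.mul_le_mul_left _ hGoodbig
  _ ≤ 2 ^ (l*D) * (2 * Good.card) := by
      apply Nat.mul_le_mul_right
      exact Nat.pow_le_pow_right (by omega) hScard
  _ = 2 ^ (l*D+1) * Good.card := by ring
  _ ≤ 2 ^ (l*D+1) * ((ballH n r x \ W.biUnion (ballH n r)).card) :=
      Nat.mul_le_mul_left _ hinj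

lemma pair_bound (n r l D : ℕ) (ε₂ : ℝ) (hε : 0 < ε₂)
    (hl1 : 1 ≤ l) (hr1 : 1 ≤ r)
    (hld : (l : ℝ) ≤ ε₂^2 * ((D : ℝ) + 1))
    (h2r : 2*r + l*D ≤ n)
    (hrn : (r : ℝ) ≤ (1/2 - ε₂) * ((n : ℝ) - (l*D : ℕ)))
    (X Y : Finset (Fin n → Bool)) (hXY : X ≠ Y)
    (hXl : X.card ≤ l) (hYl : Y.card ≤ l) :
    n.choose r ≤ 2^(l*D+1)
      * (symmDiff (X.biUnion (ballH n r)) (Y.biUnion (ballH n r))).card := by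
  obtain ⟨x, hx⟩ := Finset.symmDiff_nonempty.mpr hXY
  rw [Finset.mem_symmDiff] at hx
  rcases hx with ⟨hxX, hxY⟩ | ⟨hxY, hxX⟩
  · have hsub : ballH n r x \ Y.biUnion (ballH n r)
        ⊆ symmDiff (X.biUnion (ballH n r)) (Y.biUnion (ballH n r)) := by
      intro z hz
      rw [mem_sdiff] at hz
      rw [Finset.mem_symmDiff]
      exact Or.inl ⟨mem_biUnion.mpr ⟨x, hxX, hz.1⟩, hz.2⟩
    calc n.choose r ≤ 2^(l*D+1) * ((ballH n r x \ Y.biUnion (ballH n r)).card) :=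
          one_sided n r l D ε₂ hε hl1 hr1 hld h2r hrn x Y hxY hYl
    _ ≤ _ := Nat.mul_le_mul_left _ (card_le_card hsub)
  · have hsub : ballH n r x \ X.biUnion (ballH n r)
        ⊆ symmDiff (X.biUnion (ballH n r)) (Y.biUnion (ballH n r)) := by
      intro z hz
      rw [mem_sdiff] at hz
      rw [Finset.mem_symmDiff]
      exact Or.inr ⟨mem_biUnion.mpr ⟨x, hxY, hz.1⟩, hz.2⟩
    calc n.choose r ≤ 2^(l*D+1) * ((ballH n r x \ X.biUnion (ballH n r)).card) :=
          one_sided n r l D ε₂ hε hl1 hr1 hld h2r hrn x X hxX hXl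
    _ ≤ _ := Nat.mul_le_mul_left _ (card_le_card hsub)

/-- For fixed `ℓ ≥ 1` and `ε > 0`, there are `c > 0` and `n₀` such that for
all `n ≥ n₀` and `1 ≤ r ≤ (1/2 - ε)n`, one has `m_n(r,ℓ) ≥ c·binom(n,r)`. -/
theorem mlow_lower_bound (ℓ : ℕ) (hℓ : 1 ≤ ℓ) (ε : ℝ) (hε : 0 < ε) :
    ∃ (c : ℝ), 0 < c ∧ ∃ n₀ : ℕ, ∀ n : ℕ, n₀ ≤ n →
      ∀ r : ℕ, 1 ≤ r → (r : ℝ) ≤ (1 / 2 - ε) * n →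
        c * (n.choose r) ≤ (mlow n r ℓ : ℝ) := by
  set ε₂ : ℝ := (min ε (1/4)) / 2 with hε₂def
  have hε₂pos : 0 < ε₂ := by
    rw [hε₂def]
    have : 0 < min ε (1/4) := lt_min hε (by norm_num)
    linarith
  have hε₂le : ε₂ ≤ 1/8 := by
    rw [hε₂def]
    have : min ε (1/4) ≤ 1/4 := min_le_right _ _
    linarith
  set D : ℕ := ⌈(ℓ : ℝ) / ε₂^2⌉₊ with hDdef
  have hld : (ℓ : ℝ) ≤ ε₂^2 * ((D : ℝ) + 1) := by
    have h1 : (ℓ : ℝ) / ε₂^2 ≤ D := Nat.le_ceil _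
    have h2 : (ℓ : ℝ) ≤ ε₂^2 * D := by
      rw [div_le_iff₀ (by positivity)] at h1
      linarith [h1]
    nlinarith [sq_nonneg ε₂]
  set K : ℕ := ℓ * D + 1 with hKdef
  refine ⟨1 / 2^K, by positivity, ⌈(K : ℝ)/ε₂⌉₊ + 1, ?_⟩
  intro n hn r hr1 hrε
  have hnpos : 1 ≤ n := le_trans (by omega) hn
  have hεn : (K : ℝ) ≤ ε₂ * n := by
    have h1 : ((⌈(K : ℝ)/ε₂⌉₊ : ℕ) : ℝ) ≤ n := by exact_mod_cast le_trans (by omega) hn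
    have h2 : (K : ℝ)/ε₂ ≤ ⌈(K : ℝ)/ε₂⌉₊ := Nat.le_ceil _
    have h3 : (K : ℝ)/ε₂ ≤ n := le_trans h2 h1
    rw [div_le_iff₀ hε₂pos] at h3
    linarith
  have hrε' : (r : ℝ) ≤ (1/2 - 2*ε₂) * n := by
    refine le_trans hrε ?_
    apply mul_le_mul_of_nonneg_right _ (Nat.cast_nonneg n)
    have : min ε (1/4) ≤ ε := min_le_left _ _
    rw [hε₂def]
    linarith
  have hKlD : (ℓ * D : ℕ) < K := by omega
  have hlDK : ((ℓ*D : ℕ) : ℝ) ≤ (K : ℝ) := by exact_mod_cast le_of_lt hKlD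
  -- condition (a)
  have h2r : 2*r + ℓ*D ≤ n := by
    have hra : (2*(r:ℝ)) ≤ (1 - 4*ε₂) * n := by linarith
    have hb : ((2*r + ℓ*D : ℕ) : ℝ) ≤ (n : ℝ) := by
      push_cast
      have h4 : 4*ε₂*(n:ℝ) ≥ 4*K := by linarith
      have h5 : ((ℓ*D : ℕ):ℝ) = (ℓ:ℝ)*D := by push_cast; ring
      nlinarith
    exact_mod_cast hb
  -- condition (b)
  have hrn : (r : ℝ) ≤ (1/2 - ε₂) * ((n : ℝ) - (ℓ*D : ℕ)) := by
    have h1 : (1/2 - ε₂) * ((n : ℝ) - (ℓ*D : ℕ))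
        = (1/2 - ε₂)*n - (1/2 - ε₂)*((ℓ*D : ℕ) : ℝ) := by ring
    have h2 : (1/2 - ε₂)*((ℓ*D : ℕ) : ℝ) ≤ ((ℓ*D : ℕ) : ℝ) := by
      apply mul_le_of_le_one_left (Nat.cast_nonneg _)
      linarith
    have h3 : ε₂ * n ≥ (K:ℝ) := hεn
    rw [h1]
    have h4 : (1/2 - 2*ε₂)*n = (1/2 - ε₂)*n - ε₂*n := by ring
    linarith
  -- nonemptiness of the defining set
  have hne : {k | ∃ X Y : Finset (Fin n → Bool), X ≠ Y ∧ 1 ≤ X.card ∧ X.card ≤ ℓ ∧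
      1 ≤ Y.card ∧ Y.card ≤ ℓ ∧
      (symmDiff (X.biUnion (ballH n r)) (Y.biUnion (ballH n r))).card = k}.Nonempty := by
    set f : Fin n → Bool := fun _ => false with hf
    set g : Fin n → Bool := fun _ => true with hg
    have hfg : f ≠ g := by
      intro h
      have := congrFun h ⟨0, by omega⟩
      simp [hf, hg] at this
    refine ⟨_, {f}, {g}, ?_, ?_, ?_, ?_, ?_, rfl⟩
    · simp [hfg]
    · simp
    · simpa using hℓ
    · simp
    · simpa using hℓ
  have hmem := Nat.sInf_mem hne
  obtain ⟨X, Y, hXY, hX1, hXl, hY1, hYl, hk⟩ := hmem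
  have hb := pair_bound n r ℓ D ε₂ hε₂pos hℓ hr1 hld h2r hrn X Y hXY hXl hYl
  rw [hk] at hb
  have hbR : (n.choose r : ℝ) ≤ 2^K * (mlow n r ℓ : ℝ) := by
    have : ((2^K * mlow n r ℓ : ℕ) : ℝ) = 2^K * (mlow n r ℓ : ℝ) := by push_cast; ring
    rw [← this]
    exact_mod_cast hb
  rw [div_mul_eq_mul_div, div_le_iff₀ (by positivity : (0:ℝ) < 2^K)]
  calc (1:ℝ) * n.choose r = (n.choose r : ℝ) := by ring
  _ ≤ 2^K * (mlow n r ℓ : ℝ) := hbR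
  _ = (mlow n r ℓ : ℝ) * 2^K := by ring
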